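/- Lemma 3, inequality (51): for every (N,K) PIR scheme with K ≥ 2 and N ≥ 2, H(A_1^[2], S_{2:N} | F, W_1) ≥ (K−1)·L. -/

import Mathlib

/- Shannon entropy framework for finitely-valued random variables on a finite
probability space, and the definition of an (N,K) private information retrieval
(PIR) scheme. -/

open scoped Classical
open Finset

/-- `prob p X a` is the probability that the random variable `X` takes the value `a`,
where `p` is the probability mass function on the finite sample space `Ω`. -/
noncomputable def prob {Ω α : Type} [Fintype Ω] (p : Ω → ℝ) (X : Ω → α) (a : α) : ℝ :=
  ∑ ω : Ω, if X ω = a then p ω else 0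

/-- Shannon entropy (natural base) of a random variable `X` on a finite sample space. -/
noncomputable def ent {Ω α : Type} [Fintype Ω] (p : Ω → ℝ) (X : Ω → α) : ℝ :=
  ∑ a ∈ Finset.univ.image X, Real.negMulLog (prob p X a)

/-- Conditional Shannon entropy `H(X | Y) = H(X, Y) - H(Y)`. -/
noncomputable def condEnt {Ω α β : Type} [Fintype Ω] (p : Ω → ℝ) (X : Ω → α) (Y : Ω → β) : ℝ :=
  ent p (fun ω => (X ω, Y ω)) - ent p Y

/-- An `(N, K)` private information retrieval scheme:
`K` mutually independent messages `W` with entropy `L` each, stored contents `S` at `N`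
servers (deterministic functions of the messages), a random key `F` independent of the
messages, queries `Q` (deterministic functions of `F`), answers `A` (deterministic
functions of the query and the stored content, with an answer function not depending on
the desired index), correctness and privacy. Messages/servers are indexed `0, …, K-1`
and `0, …, N-1` (paper index `i` corresponds to index `i - 1` here). -/
structure PIRScheme (N K : ℕ) where
  Ω : Type
  [finΩ : Fintype Ω]
  Msg : Type
  Sto : Type
  Qry : Type
  Ans : Type
  Key : Type
  p : Ω → ℝ
  p_nonneg : ∀ ω, 0 ≤ p ω
  p_sum : ∑ ω : Ω, p ω = 1
  L : ℝ
  L_pos : 0 < L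
  W : Fin K → Ω → Msg
  S : Fin N → Ω → Sto
  F : Ω → Key
  Q : Fin K → Fin N → Ω → Qry
  A : Fin K → Fin N → Ω → Ans
  W_indep : ∀ w : Fin K → Msg,
    prob p (fun ω => (fun k => W k ω)) w = ∏ k : Fin K, prob p (W k) (w k)
  W_ent : ∀ k, ent p (W k) = L
  F_indep : ∀ (f : Key) (w : Fin K → Msg),
    prob p (fun ω => (F ω, fun k => W k ω)) (f, w)
      = prob p F f * prob p (fun ω => (fun k => W k ω)) w
  S_det : ∀ n : Fin N, ∃ g : (Fin K → Msg) → Sto, ∀ ω, S n ω = g (fun k => W k ω)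
  Q_det : ∀ (k : Fin K) (n : Fin N), ∃ g : Key → Qry, ∀ ω, Q k n ω = g (F ω)
  A_det : ∀ n : Fin N, ∃ φ : Qry → Sto → Ans, ∀ (k : Fin K) (ω : Ω), A k n ω = φ (Q k n ω) (S n ω)
  correct : ∀ k : Fin K, ∃ g : (Fin N → Ans) → (Fin N → Qry) → Msg,
    ∀ ω, W k ω = g (fun n => A k n ω) (fun n => Q k n ω)
  privacy : ∀ (n : Fin N) (k k' : Fin K) (q : Qry),
    prob p (Q k n) q = prob p (Q k' n) q

attribute [instance] PIRScheme.finΩ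

/-- The set of server (or message) indices `{i : i < m}`, i.e. paper indices `1, …, m`. -/
def finLt (N m : ℕ) : Finset (Fin N) := Finset.univ.filter (fun i => i.val < m)

/-- The set of server (or message) indices `{i : m ≤ i}`, i.e. paper indices `m+1, …, N`. -/
def finGe (N m : ℕ) : Finset (Fin N) := Finset.univ.filter (fun i => m ≤ i.val)

namespace PIRScheme

variable {N K : ℕ}

/-- Informational normalized storage cost `α = (1/(N L)) ∑ₙ H(Sₙ)`. -/
noncomputable def alpha (s : PIRScheme N K) : ℝ :=
  (1 / (N * s.L)) * ∑ n : Fin N, ent s.p (s.S n)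

/-- Informational normalized download cost for desired message `k`:
`(1/(N L)) ∑ₙ H(Aₙ^[k] | Q₁^[k], …, Q_N^[k])`.  The download cost `β` of the scheme is
`betaAt` at the first message. -/
noncomputable def betaAt (s : PIRScheme N K) (k : Fin K) : ℝ :=
  (1 / (N * s.L)) *
    ∑ n : Fin N, condEnt s.p (s.A k n) (fun ω => (fun n' : Fin N => s.Q k n' ω))

/-- The joint random variable `S_B = (Sₙ : n ∈ B)`. -/
noncomputable def jointS (s : PIRScheme N K) (B : Finset (Fin N)) : s.Ω → (B → s.Sto) :=
  fun ω i => s.S i.1 ω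

/-- The joint random variable `A_B^[k] = (Aₙ^[k] : n ∈ B)`. -/
noncomputable def jointA (s : PIRScheme N K) (k : Fin K) (B : Finset (Fin N)) :
    s.Ω → (B → s.Ans) :=
  fun ω i => s.A k i.1 ω

/-- The joint random variable `W_C = (Wₖ : k ∈ C)`. -/
noncomputable def jointW (s : PIRScheme N K) (C : Finset (Fin K)) : s.Ω → (C → s.Msg) :=
  fun ω i => s.W i.1 ω

/-- A scheme is symmetric if
`H(S_A, A_B^[k] | F, W_C) = H(S_{π(A)}, A_{π(B)}^[π'(k)] | F, W_{π'(C)})` for all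
permutations `π` of the servers and `π'` of the messages. -/
def Symmetric (s : PIRScheme N K) : Prop :=
  ∀ (A B : Finset (Fin N)) (C : Finset (Fin K)) (k : Fin K)
    (π : Equiv.Perm (Fin N)) (π' : Equiv.Perm (Fin K)),
    condEnt s.p (fun ω => (s.jointS A ω, s.jointA k B ω)) (fun ω => (s.F ω, s.jointW C ω))
      = condEnt s.p (fun ω => (s.jointS (A.image ⇑π) ω, s.jointA (π' k) (B.image ⇑π) ω))
          (fun ω => (s.F ω, s.jointW (C.image ⇑π') ω))

end PIRScheme



/-! ### Auxiliary entropy toolkit and proof -/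

section Toolkit

variable {Ω α β γ δ : Type} [Fintype Ω]

lemma prob_nonneg {p : Ω → ℝ} (hp : ∀ ω, 0 ≤ p ω) (X : Ω → α) (a : α) : 0 ≤ prob p X a := by
  apply Finset.sum_nonneg; intro ω _
  split
  · exact hp ω
  · exact le_rfl

lemma prob_congr {p : Ω → ℝ} {X : Ω → α} {Y : Ω → β} {a : α} {b : β}
    (h : ∀ ω, X ω = a ↔ Y ω = b) : prob p X a = prob p Y b := by
  apply Finset.sum_congr rfl; intro ω _
  by_cases hx : X ω = a
  · rw [if_pos hx, if_pos ((h ω).mp hx)]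
  · rw [if_neg hx, if_neg (fun hy => hx ((h ω).mpr hy))]

lemma prob_eq_zero {p : Ω → ℝ} {X : Ω → α} {a : α} (h : ∀ ω, X ω ≠ a) :
    prob p X a = 0 := by
  apply Finset.sum_eq_zero; intro ω _
  rw [if_neg (h ω)]

lemma sum_prob_superset {p : Ω → ℝ} (hsum : ∑ ω : Ω, p ω = 1) {X : Ω → α} {A : Finset α}
    (hA : ∀ ω, X ω ∈ A) : ∑ a ∈ A, prob p X a = 1 := by
  unfold prob
  rw [Finset.sum_comm, ← hsum]
  apply Finset.sum_congr rfl; intro ω _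
  rw [Finset.sum_ite_eq A (X ω) (fun _ => p ω), if_pos (hA ω)]

lemma ent_superset {p : Ω → ℝ} {X : Ω → α} {A : Finset α} (hA : ∀ ω, X ω ∈ A) :
    ent p X = ∑ a ∈ A, Real.negMulLog (prob p X a) := by
  refine Finset.sum_subset (fun a ha => ?_) (fun a _ ha => ?_)
  · obtain ⟨ω, _, rfl⟩ := Finset.mem_image.mp ha
    exact hA ω
  · rw [prob_eq_zero (fun ω hω => ha (Finset.mem_image.mpr ⟨ω, Finset.mem_univ ω, hω⟩)),
      Real.negMulLog_zero]

lemma ent_congr {p : Ω → ℝ} {X : Ω → α} {Y : Ω → β} (u : α → β) (v : β → α)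
    (hu : ∀ ω, Y ω = u (X ω)) (hv : ∀ ω, X ω = v (Y ω)) : ent p X = ent p Y := by
  have himg : Finset.univ.image Y = (Finset.univ.image X).image u := by
    ext b; simp only [Finset.mem_image, Finset.mem_univ, true_and]
    constructor
    · rintro ⟨ω, rfl⟩; exact ⟨X ω, ⟨ω, rfl⟩, (hu ω).symm⟩
    · rintro ⟨a, ⟨ω, rfl⟩, rfl⟩; exact ⟨ω, hu ω⟩
  have hvu : ∀ a ∈ Finset.univ.image X, v (u a) = a := by
    intro a ha; obtain ⟨ω, _, rfl⟩ := Finset.mem_image.mp ha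
    rw [← hu ω, ← hv ω]
  have hinj : ∀ a ∈ Finset.univ.image X, ∀ a' ∈ Finset.univ.image X, u a = u a' → a = a' := by
    intro a ha a' ha' h
    calc a = v (u a) := (hvu a ha).symm
    _ = v (u a') := by rw [h]
    _ = a' := hvu a' ha'
  show ent p X = ent p Y
  unfold ent
  rw [himg, Finset.sum_image hinj]
  refine Finset.sum_congr rfl (fun a ha => ?_)
  congr 1
  refine prob_congr (fun ω => ?_)
  constructor
  · intro h; rw [hu ω, h]
  · intro h; rw [hv ω, h, hvu a ha]

lemma condEnt_congr_left {p : Ω → ℝ} {X : Ω → α} {X' : Ω → γ} {Y : Ω → β}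
    (u : α → γ) (v : γ → α) (hu : ∀ ω, X' ω = u (X ω)) (hv : ∀ ω, X ω = v (X' ω)) :
    condEnt p X Y = condEnt p X' Y := by
  unfold condEnt
  congr 1
  exact ent_congr (fun z => (u z.1, z.2)) (fun z => (v z.1, z.2))
    (fun ω => by simp [hu ω]) (fun ω => by simp [hv ω])

lemma condEnt_congr_right {p : Ω → ℝ} {X : Ω → α} {Y : Ω → β} {Y' : Ω → δ}
    (u : β → δ) (v : δ → β) (hu : ∀ ω, Y' ω = u (Y ω)) (hv : ∀ ω, Y ω = v (Y' ω)) :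
    condEnt p X Y = condEnt p X Y' := by
  unfold condEnt
  rw [ent_congr (p := p) (X := Y) (Y := Y') u v hu hv,
    ent_congr (p := p) (X := fun ω => (X ω, Y ω)) (Y := fun ω => (X ω, Y' ω))
      (fun z => (z.1, u z.2)) (fun z => (z.1, v z.2))
      (fun ω => by simp [hu ω]) (fun ω => by simp [hv ω])]

lemma condEnt_chain (p : Ω → ℝ) (X : Ω → α) (Y : Ω → β) (Z : Ω → γ) :
    condEnt p (fun ω => (X ω, Y ω)) Z
      = condEnt p X (fun ω => (Y ω, Z ω)) + condEnt p Y Z := by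
  unfold condEnt
  have h1 : ent p (fun ω => ((X ω, Y ω), Z ω)) = ent p (fun ω => (X ω, (Y ω, Z ω))) :=
    ent_congr (fun q => (q.1.1, (q.1.2, q.2))) (fun q => ((q.1, q.2.1), q.2.2))
      (fun ω => rfl) (fun ω => rfl)
  rw [h1]; ring

lemma condEnt_comp_eq_zero {p : Ω → ℝ} {X : Ω → α} {Y : Ω → β} (g : β → α)
    (h : ∀ ω, X ω = g (Y ω)) : condEnt p X Y = 0 := by
  unfold condEnt
  rw [ent_congr (p := p) (X := fun ω => (X ω, Y ω)) (Y := Y) Prod.snd (fun b => (g b, b))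
    (fun ω => rfl) (fun ω => by simp [h ω])]
  ring

end Toolkit

section Toolkit2

variable {Ω α β γ δ κ : Type} [Fintype Ω]

lemma negMulLog_add_le {x y : ℝ} (hx : 0 ≤ x) (hy : 0 ≤ y) :
    Real.negMulLog (x + y) ≤ Real.negMulLog x + Real.negMulLog y := by
  rcases eq_or_lt_of_le hx with h | hx'
  · simp [← h]
  rcases eq_or_lt_of_le hy with h | hy'
  · simp [← h]
  have l1 : Real.log x ≤ Real.log (x + y) := Real.log_le_log hx' (by linarith)
  have l2 : Real.log y ≤ Real.log (x + y) := Real.log_le_log hy' (by linarith)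
  have h1 : x * Real.log x ≤ x * Real.log (x + y) := mul_le_mul_of_nonneg_left l1 hx
  have h2 : y * Real.log y ≤ y * Real.log (x + y) := mul_le_mul_of_nonneg_left l2 hy
  simp only [Real.negMulLog, neg_mul]
  nlinarith

lemma negMulLog_sum_le {ι : Type} {s : Finset ι} {g : ι → ℝ} (hg : ∀ i ∈ s, 0 ≤ g i) :
    Real.negMulLog (∑ i ∈ s, g i) ≤ ∑ i ∈ s, Real.negMulLog (g i) := by
  induction s using Finset.cons_induction with
  | empty => simp
  | cons i s hi ih =>
    rw [Finset.sum_cons, Finset.sum_cons]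
    have h0 : 0 ≤ ∑ j ∈ s, g j :=
      Finset.sum_nonneg (fun j hj => hg j (Finset.mem_cons_of_mem hj))
    calc Real.negMulLog (g i + ∑ j ∈ s, g j)
        ≤ Real.negMulLog (g i) + Real.negMulLog (∑ j ∈ s, g j) :=
          negMulLog_add_le (hg i (Finset.mem_cons_self i s)) h0
      _ ≤ _ := by
          have := ih (fun j hj => hg j (Finset.mem_cons_of_mem hj))
          linarith

lemma prob_comp (p : Ω → ℝ) (X : Ω → α) (h : α → β) (b : β) :
    prob p (fun ω => h (X ω)) b
      = ∑ a ∈ (Finset.univ.image X).filter (fun a => h a = b), prob p X a := by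
  unfold prob
  rw [Finset.sum_comm]
  refine Finset.sum_congr rfl (fun ω _ => ?_)
  by_cases hc : h (X ω) = b
  · rw [if_pos hc]
    rw [Finset.sum_eq_single_of_mem (X ω)
      (Finset.mem_filter.mpr ⟨Finset.mem_image_of_mem X (Finset.mem_univ ω), hc⟩)]
    · rw [if_pos rfl]
    · intro a _ hne; rw [if_neg (fun he => hne he.symm)]
  · rw [if_neg hc]
    refine (Finset.sum_eq_zero (fun a ha => ?_)).symm
    rw [if_neg]
    intro he
    exact hc (he ▸ (Finset.mem_filter.mp ha).2)

lemma prob_pair_comp (p : Ω → ℝ) (Fv : Ω → κ) (X : Ω → α) (h : α → β) (f : κ) (b : β) :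
    prob p (fun ω => (Fv ω, h (X ω))) (f, b)
      = ∑ a ∈ (Finset.univ.image X).filter (fun a => h a = b),
          prob p (fun ω => (Fv ω, X ω)) (f, a) := by
  unfold prob
  rw [Finset.sum_comm]
  refine Finset.sum_congr rfl (fun ω _ => ?_)
  by_cases hc : Fv ω = f ∧ h (X ω) = b
  · rw [if_pos (by simp [hc.1, hc.2])]
    rw [Finset.sum_eq_single_of_mem (X ω)
      (Finset.mem_filter.mpr ⟨Finset.mem_image_of_mem X (Finset.mem_univ ω), hc.2⟩)]
    · rw [if_pos (by simp [hc.1])]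
    · intro a _ hne
      rw [if_neg]
      simp only [Prod.mk.injEq, not_and]
      intro _ he; exact hne he.symm
  · rw [if_neg (by simp only [Prod.mk.injEq, not_and]; intro h1 h2; exact hc ⟨h1, h2 ▸ rfl⟩)]
    refine (Finset.sum_eq_zero (fun a ha => ?_)).symm
    rw [if_neg]
    simp only [Prod.mk.injEq, not_and]
    intro h1 h2
    exact hc ⟨h1, h2 ▸ (Finset.mem_filter.mp ha).2⟩

lemma indep_comp {p : Ω → ℝ} {Fv : Ω → κ} {X : Ω → α}
    (hind : ∀ f a, prob p (fun ω => (Fv ω, X ω)) (f, a) = prob p Fv f * prob p X a)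
    (h : α → β) (f : κ) (b : β) :
    prob p (fun ω => (Fv ω, h (X ω))) (f, b)
      = prob p Fv f * prob p (fun ω => h (X ω)) b := by
  rw [prob_pair_comp p Fv X h f b, prob_comp p X h b, Finset.mul_sum]
  exact Finset.sum_congr rfl (fun a _ => hind f a)

lemma ent_pair_of_indep {p : Ω → ℝ} (hsum : ∑ ω : Ω, p ω = 1) {X : Ω → α} {Z : Ω → γ}
    (hind : ∀ a c, prob p (fun ω => (X ω, Z ω)) (a, c) = prob p X a * prob p Z c) :
    ent p (fun ω => (X ω, Z ω)) = ent p X + ent p Z := by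
  have h1 : ∑ a ∈ Finset.univ.image X, prob p X a = 1 :=
    sum_prob_superset hsum (fun ω => Finset.mem_image_of_mem X (Finset.mem_univ ω))
  have h2 : ∑ c ∈ Finset.univ.image Z, prob p Z c = 1 :=
    sum_prob_superset hsum (fun ω => Finset.mem_image_of_mem Z (Finset.mem_univ ω))
  rw [ent_superset (p := p) (X := fun ω => (X ω, Z ω))
    (A := (Finset.univ.image X) ×ˢ (Finset.univ.image Z))
    (fun ω => Finset.mem_product.mpr ⟨Finset.mem_image_of_mem X (Finset.mem_univ ω),
        Finset.mem_image_of_mem Z (Finset.mem_univ ω)⟩)]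
  rw [Finset.sum_product]
  unfold ent
  have hterm : ∀ a ∈ Finset.univ.image X,
      (∑ c ∈ Finset.univ.image Z, Real.negMulLog (prob p (fun ω => (X ω, Z ω)) (a, c)))
        = Real.negMulLog (prob p X a)
          + prob p X a * ∑ c ∈ Finset.univ.image Z, Real.negMulLog (prob p Z c) := by
    intro a _
    have hc : ∀ c ∈ Finset.univ.image Z,
        Real.negMulLog (prob p (fun ω => (X ω, Z ω)) (a, c))
          = prob p Z c * Real.negMulLog (prob p X a)
            + prob p X a * Real.negMulLog (prob p Z c) := by
      intro c _
      rw [hind a c, Real.negMulLog_mul]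
    rw [Finset.sum_congr rfl hc, Finset.sum_add_distrib, ← Finset.sum_mul, h2, one_mul,
      ← Finset.mul_sum]
  rw [Finset.sum_congr rfl hterm, Finset.sum_add_distrib, ← Finset.sum_mul, h1, one_mul]

lemma condEnt_of_indep {p : Ω → ℝ} (hsum : ∑ ω : Ω, p ω = 1) {X : Ω → α} {Z : Ω → γ}
    (hind : ∀ a c, prob p (fun ω => (X ω, Z ω)) (a, c) = prob p X a * prob p Z c) :
    condEnt p X Z = ent p X := by
  unfold condEnt
  rw [ent_pair_of_indep hsum hind]; ring

lemma ent_comp_le {p : Ω → ℝ} (hp : ∀ ω, 0 ≤ p ω) (X : Ω → α) (h : α → β) :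
    ent p (fun ω => h (X ω)) ≤ ent p X := by
  unfold ent
  calc ∑ b ∈ Finset.univ.image (fun ω => h (X ω)),
        Real.negMulLog (prob p (fun ω => h (X ω)) b)
      ≤ ∑ b ∈ Finset.univ.image (fun ω => h (X ω)),
          ∑ a ∈ (Finset.univ.image X).filter (fun a => h a = b),
            Real.negMulLog (prob p X a) := by
        refine Finset.sum_le_sum (fun b _ => ?_)
        rw [prob_comp p X h b]
        exact negMulLog_sum_le (fun a _ => prob_nonneg hp X a)
    _ = ∑ a ∈ Finset.univ.image X, Real.negMulLog (prob p X a) := by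
        refine Finset.sum_fiberwise_of_maps_to (fun a ha => ?_) _
        obtain ⟨ω, _, rfl⟩ := Finset.mem_image.mp ha
        exact Finset.mem_image_of_mem (fun ω => h (X ω)) (Finset.mem_univ ω)

lemma condEnt_nonneg {p : Ω → ℝ} (hp : ∀ ω, 0 ≤ p ω) (X : Ω → α) (Y : Ω → β) :
    0 ≤ condEnt p X Y := by
  unfold condEnt
  rw [sub_nonneg]
  exact ent_comp_le hp (fun ω => (X ω, Y ω)) Prod.snd

lemma sum_prob_mul (p : Ω → ℝ) (X : Ω → α) (ψ : α → ℝ) :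
    ∑ a ∈ Finset.univ.image X, prob p X a * ψ a = ∑ ω : Ω, p ω * ψ (X ω) := by
  unfold prob
  have hterm : ∀ a ∈ Finset.univ.image X,
      (∑ ω : Ω, if X ω = a then p ω else 0) * ψ a
        = ∑ ω : Ω, if X ω = a then p ω * ψ (X ω) else 0 := by
    intro a _
    rw [Finset.sum_mul]
    refine Finset.sum_congr rfl (fun ω _ => ?_)
    by_cases h : X ω = a
    · rw [if_pos h, if_pos h, h]
    · rw [if_neg h, if_neg h, zero_mul]
  rw [Finset.sum_congr rfl hterm, Finset.sum_comm]
  refine Finset.sum_congr rfl (fun ω _ => ?_)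
  rw [Finset.sum_ite_eq (Finset.univ.image X) (X ω) (fun _ => p ω * ψ (X ω)),
    if_pos (Finset.mem_image_of_mem X (Finset.mem_univ ω))]

end Toolkit2

section Swap

variable {Ω Key Wt Qry α γ : Type} [Fintype Ω]

/-- If `F ⊥ Wv` and `q ∘ F` has the same distribution as `q' ∘ F`, then the conditional
entropy of a variable of the form `G (q (F ω)) (Wv ω)` given `(F, T ∘ Wv)` is unchanged
when `q` is replaced by `q'`. -/
lemma swap_general {p : Ω → ℝ} (hsum : ∑ ω : Ω, p ω = 1)
    (F : Ω → Key) (Wv : Ω → Wt)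
    (hind : ∀ f w, prob p (fun ω => (F ω, Wv ω)) (f, w) = prob p F f * prob p Wv w)
    (q q' : Key → Qry)
    (hq : ∀ x, prob p (fun ω => q (F ω)) x = prob p (fun ω => q' (F ω)) x)
    (G : Qry → Wt → α) (T : Wt → γ) :
    condEnt p (fun ω => G (q (F ω)) (Wv ω)) (fun ω => (F ω, T (Wv ω)))
      = condEnt p (fun ω => G (q' (F ω)) (Wv ω)) (fun ω => (F ω, T (Wv ω))) := by
  classical
  -- distribution of (G qq ∘ Wv, T ∘ Wv) for a fixed query value qq
  set D : Qry → α × γ → ℝ := fun qq z => prob p (fun ω => (G qq (Wv ω), T (Wv ω))) z with hD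
  -- a finite set of values covering the image for every relevant query value
  set Zall : Finset (α × γ) :=
    (Finset.univ.image (fun pr : Ω × Ω => (G (q (F pr.1)) (Wv pr.2), T (Wv pr.2))))
    ∪ (Finset.univ.image (fun pr : Ω × Ω => (G (q' (F pr.1)) (Wv pr.2), T (Wv pr.2)))) with hZall
  set E : Qry → ℝ := fun qq => ∑ z ∈ Zall, Real.negMulLog (D qq z) with hE
  -- key probability identity
  have key : ∀ (qf : Key → Qry) (f : Key) (z : α × γ),
      prob p (fun ω => (F ω, (G (qf (F ω)) (Wv ω), T (Wv ω)))) (f, z)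
        = prob p F f * D (qf f) z := by
    intro qf f z
    have step : prob p (fun ω => (F ω, (G (qf (F ω)) (Wv ω), T (Wv ω)))) (f, z)
        = prob p (fun ω => (F ω, (G (qf f) (Wv ω), T (Wv ω)))) (f, z) := by
      refine prob_congr (fun ω => ?_)
      constructor
      · rintro h
        rw [Prod.mk.injEq] at h ⊢
        refine ⟨h.1, ?_⟩
        rw [← h.1]
        exact h.2
      · rintro h
        rw [Prod.mk.injEq] at h ⊢
        refine ⟨h.1, ?_⟩
        rw [h.1]
        exact h.2
    rw [step]
    exact indep_comp hind (fun w => (G (qf f) w, T w)) f z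
  -- entropy of the triple, for qf ∈ {q, q'}
  have triple : ∀ qf : Key → Qry,
      (∀ ω₁ ω : Ω, (G (qf (F ω₁)) (Wv ω), T (Wv ω)) ∈ Zall) →
      ent p (fun ω => (F ω, (G (qf (F ω)) (Wv ω), T (Wv ω))))
        = ent p F + ∑ f ∈ Finset.univ.image F, prob p F f * E (qf f) := by
    intro qf hZ
    rw [ent_superset (p := p) (X := fun ω => (F ω, (G (qf (F ω)) (Wv ω), T (Wv ω))))
      (A := (Finset.univ.image F) ×ˢ Zall)
      (fun ω => Finset.mem_product.mpr
        ⟨Finset.mem_image_of_mem F (Finset.mem_univ ω), hZ ω ω⟩)]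
    rw [Finset.sum_product]
    have hterm : ∀ f ∈ Finset.univ.image F,
        (∑ z ∈ Zall,
          Real.negMulLog (prob p (fun ω => (F ω, (G (qf (F ω)) (Wv ω), T (Wv ω)))) (f, z)))
          = Real.negMulLog (prob p F f) + prob p F f * E (qf f) := by
      intro f hf
      obtain ⟨ω₁, _, rfl⟩ := Finset.mem_image.mp hf
      have hDsum : ∑ z ∈ Zall, D (qf (F ω₁)) z = 1 :=
        sum_prob_superset hsum (fun ω => hZ ω₁ ω)
      have hz : ∀ z ∈ Zall,
          Real.negMulLog (prob p (fun ω => (F ω, (G (qf (F ω)) (Wv ω), T (Wv ω)))) (F ω₁, z))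
            = D (qf (F ω₁)) z * Real.negMulLog (prob p F (F ω₁))
              + prob p F (F ω₁) * Real.negMulLog (D (qf (F ω₁)) z) := by
        intro z _
        rw [key qf (F ω₁) z, Real.negMulLog_mul]
      rw [Finset.sum_congr rfl hz, Finset.sum_add_distrib, ← Finset.sum_mul, hDsum, one_mul,
        ← Finset.mul_sum]
    rw [Finset.sum_congr rfl hterm, Finset.sum_add_distrib]
    rfl
  -- regrouping by the value of the query
  have regroup : ∀ qf : Key → Qry,
      ∑ f ∈ Finset.univ.image F, prob p F f * E (qf f)
        = ∑ ω : Ω, p ω * E (qf (F ω)) := fun qf => sum_prob_mul p F (fun f => E (qf f))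
  have regroup2 : ∀ qf : Key → Qry,
      ∑ ω : Ω, p ω * E (qf (F ω))
        = ∑ x ∈ Finset.univ.image (fun ω => qf (F ω)), prob p (fun ω => qf (F ω)) x * E x :=
    fun qf => (sum_prob_mul p (fun ω => qf (F ω)) E).symm
  -- the two weighted sums agree by privacy
  have main : ∑ f ∈ Finset.univ.image F, prob p F f * E (q f)
      = ∑ f ∈ Finset.univ.image F, prob p F f * E (q' f) := by
    rw [regroup q, regroup q', regroup2 q, regroup2 q']
    set A1 := Finset.univ.image (fun ω => q (F ω)) with hA1
    set A2 := Finset.univ.image (fun ω => q' (F ω)) with hA2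
    have e1 : ∑ x ∈ A1, prob p (fun ω => q (F ω)) x * E x
        = ∑ x ∈ A1 ∪ A2, prob p (fun ω => q (F ω)) x * E x := by
      refine Finset.sum_subset Finset.subset_union_left (fun x _ hx => ?_)
      rw [prob_eq_zero (fun ω hω => hx ?_), zero_mul]
      rw [hA1, ← hω]
      exact Finset.mem_image_of_mem _ (Finset.mem_univ ω)
    have e2 : ∑ x ∈ A2, prob p (fun ω => q' (F ω)) x * E x
        = ∑ x ∈ A1 ∪ A2, prob p (fun ω => q' (F ω)) x * E x := by
      refine Finset.sum_subset Finset.subset_union_right (fun x _ hx => ?_)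
      rw [prob_eq_zero (fun ω hω => hx ?_), zero_mul]
      rw [hA2, ← hω]
      exact Finset.mem_image_of_mem _ (Finset.mem_univ ω)
    rw [e1, e2]
    exact Finset.sum_congr rfl (fun x _ => by rw [hq x])
  -- finish
  unfold condEnt
  have relabel : ∀ qf : Key → Qry,
      ent p (fun ω => (G (qf (F ω)) (Wv ω), (F ω, T (Wv ω))))
        = ent p (fun ω => (F ω, (G (qf (F ω)) (Wv ω), T (Wv ω)))) := by
    intro qf
    exact ent_congr (fun z => (z.2.1, (z.1, z.2.2))) (fun z => (z.2.1, (z.1, z.2.2)))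
      (fun ω => rfl) (fun ω => rfl)
  rw [relabel q, relabel q',
    triple q (fun ω₁ ω => Finset.mem_union_left _
      (Finset.mem_image_of_mem _ (Finset.mem_univ (ω₁, ω)))),
    triple q' (fun ω₁ ω => Finset.mem_union_right _
      (Finset.mem_image_of_mem _ (Finset.mem_univ (ω₁, ω)))),
    main]

end Swap

namespace PIRScheme

variable {N K : ℕ}

lemma nonempty_omega (s : PIRScheme N K) : Nonempty s.Ω := by
  by_contra h
  rw [not_nonempty_iff] at h
  have hs := s.p_sum
  rw [Finset.univ_eq_empty, Finset.sum_empty] at hs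
  norm_num at hs

/-- Master factorization: `(F, W_C)` has a product distribution. -/
lemma prob_F_jointW (s : PIRScheme N K) (C : Finset (Fin K)) (f : s.Key)
    (u : Fin K → s.Msg) :
    prob s.p (fun ω => (s.F ω, s.jointW C ω)) (f, fun i => u i.1)
      = prob s.p s.F f * ∏ k ∈ C, prob s.p (s.W k) (u k) := by
  classical
  have h0 : prob s.p (fun ω => (s.F ω, s.jointW C ω)) (f, fun i => u i.1)
      = prob s.p (fun ω => (s.F ω,
          (fun w : Fin K → s.Msg => (fun i : C => w i.1)) ((fun k => s.W k ω))))
          (f, fun i => u i.1) :=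
    prob_congr (fun ω => Iff.rfl)
  rw [h0, prob_pair_comp s.p s.F (fun ω => (fun k => s.W k ω))
    (fun w => (fun i : C => w i.1)) f (fun i => u i.1)]
  refine Eq.trans (Finset.sum_congr rfl
    (fun w _ => by rw [s.F_indep f w, s.W_indep w])) ?_
  rw [← Finset.mul_sum]
  congr 1
  refine Eq.trans (Finset.sum_subset
    (s₂ := Fintype.piFinset
      (fun k => if k ∈ C then {u k} else Finset.univ.image (s.W k))) ?_ ?_) ?_
  · intro w hw
    simp only [Finset.mem_filter, Finset.mem_image, Finset.mem_univ, true_and] at hw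
    obtain ⟨⟨ω, rfl⟩, hw2⟩ := hw
    refine Fintype.mem_piFinset.mpr (fun k => ?_)
    show s.W k ω ∈ (if k ∈ C then ({u k} : Finset s.Msg) else Finset.univ.image (s.W k))
    by_cases hk : k ∈ C
    · rw [if_pos hk, Finset.mem_singleton]
      exact congrFun hw2 ⟨k, hk⟩
    · rw [if_neg hk]
      exact Finset.mem_image_of_mem _ (Finset.mem_univ ω)
  · intro w hw hnw
    rw [← s.W_indep w]
    refine prob_eq_zero (fun ω hω => hnw ?_)
    simp only [Finset.mem_filter, Finset.mem_image, Finset.mem_univ, true_and]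
    refine ⟨⟨ω, hω⟩, funext (fun i => ?_)⟩
    have hpi : w i.1 ∈ (if i.1 ∈ C then ({u i.1} : Finset s.Msg)
        else Finset.univ.image (s.W i.1)) := Fintype.mem_piFinset.mp hw i.1
    rw [if_pos i.2, Finset.mem_singleton] at hpi
    exact hpi
  rw [← Finset.prod_univ_sum (fun k => if k ∈ C then {u k} else Finset.univ.image (s.W k))
    (fun k x => prob s.p (s.W k) x)]
  have hfac : ∀ k : Fin K,
      (∑ x ∈ (if k ∈ C then ({u k} : Finset s.Msg) else Finset.univ.image (s.W k)),
        prob s.p (s.W k) x) = (if k ∈ C then prob s.p (s.W k) (u k) else 1) := by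
    intro k
    by_cases hk : k ∈ C
    · rw [if_pos hk, if_pos hk, Finset.sum_singleton]
    · rw [if_neg hk, if_neg hk]
      exact sum_prob_superset s.p_sum
        (fun ω => Finset.mem_image_of_mem _ (Finset.mem_univ ω))
  refine Eq.trans (Finset.prod_congr rfl (fun k _ => hfac k)) ?_
  rw [Finset.prod_ite_mem Finset.univ C (fun k => prob s.p (s.W k) (u k)), Finset.univ_inter]

/-- `W m` is independent of `(F, W_C)` when `m ∉ C`. -/
lemma indep_W_F_jointW (s : PIRScheme N K) {m : Fin K} {C : Finset (Fin K)} (hm : m ∉ C)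
    (hMsg : Nonempty s.Msg) (a : s.Msg) (z : s.Key × (C → s.Msg)) :
    prob s.p (fun ω => (s.W m ω, (s.F ω, s.jointW C ω))) (a, z)
      = prob s.p (s.W m) a * prob s.p (fun ω => (s.F ω, s.jointW C ω)) z := by
  classical
  obtain ⟨f, u⟩ := z
  set ubar : Fin K → s.Msg := fun k => if h : k ∈ C then u ⟨k, h⟩ else a with hubar
  have hum : ubar m = a := by rw [hubar]; exact dif_neg hm
  have huu : (fun i : C => ubar i.1) = u := by
    funext i
    rw [hubar]
    exact dif_pos i.2
  have h1 : prob s.p (fun ω => (s.W m ω, (s.F ω, s.jointW C ω))) (a, (f, u))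
      = prob s.p (fun ω => (s.F ω, s.jointW (insert m C) ω)) (f, fun i => ubar i.1) := by
    refine prob_congr (fun ω => ?_)
    simp only [Prod.mk.injEq]
    constructor
    · rintro ⟨h1, h2, h3⟩
      refine ⟨h2, funext (fun i => ?_)⟩
      rcases Finset.mem_insert.mp i.2 with hi | hi
      · have him : i.1 = m := hi
        show s.W i.1 ω = ubar i.1
        rw [him]
        show s.W m ω = if h : m ∈ C then u ⟨m, h⟩ else a
        rw [dif_neg hm, ← h1]
      · show s.W i.1 ω = if h : i.1 ∈ C then u ⟨i.1, h⟩ else a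
        rw [dif_pos hi, ← h3]
        rfl
    · rintro ⟨h1, h2⟩
      refine ⟨?_, h1, funext (fun i => ?_)⟩
      · have := congrFun h2 ⟨m, Finset.mem_insert_self m C⟩
        rw [← hum]
        exact this
      · have := congrFun h2 ⟨i.1, Finset.mem_insert_of_mem i.2⟩
        show s.W i.1 ω = u i
        rw [← huu]
        exact this
  have h2 : prob s.p (fun ω => (s.F ω, s.jointW C ω)) (f, u)
      = prob s.p (fun ω => (s.F ω, s.jointW C ω)) (f, fun i => ubar i.1) := by
    rw [huu]
  rw [h1, h2, prob_F_jointW s (insert m C) f ubar, prob_F_jointW s C f ubar,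
    Finset.prod_insert hm, hum]
  ring

/-- Decoding: `W m` is a function of `(A m n0, S_{2:N}, F)`. -/
lemma decode (s : PIRScheme N K) (hN : 2 ≤ N) (n0 : Fin N) (hn0 : (n0 : ℕ) = 0)
    (m : Fin K) {γ : Type} (Z : s.Ω → γ) :
    ∃ g : (s.Ans × ((finGe N 1 : Finset (Fin N)) → s.Sto)) × (s.Key × γ) → s.Msg,
      ∀ ω, s.W m ω = g ((s.A m n0 ω, s.jointS (finGe N 1) ω), (s.F ω, Z ω)) := by
  classical
  obtain ⟨dec, hdec⟩ := s.correct m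
  choose φ hφ using s.A_det
  choose qf hqf using s.Q_det
  refine ⟨fun x => dec
    (fun n => if h : n = n0 then x.1.1
      else φ n (qf m n x.2.1) (x.1.2 ⟨n, Finset.mem_filter.mpr
        ⟨Finset.mem_univ n, by omega⟩⟩))
    (fun n => qf m n x.2.1), fun ω => ?_⟩
  rw [hdec ω]
  congr 1
  · funext n
    by_cases h : n = n0
    · rw [dif_pos h, h]
    · rw [dif_neg h]
      show s.A m n ω = φ n (qf m n (s.F ω)) (s.S n ω)
      rw [← hqf m n ω]
      exact hφ n m ω
  · funext n
    rw [← hqf m n ω]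

/-- Privacy: swapping the desired message index in `(A k n0, S_{2:N})` does not change
its conditional entropy given `(F, T ∘ W)`. -/
lemma swap_pir (s : PIRScheme N K) (hN : 2 ≤ N) (n0 : Fin N) (k k' : Fin K)
    {γ : Type} (T : (Fin K → s.Msg) → γ) :
    condEnt s.p (fun ω => (s.A k n0 ω, s.jointS (finGe N 1) ω))
        (fun ω => (s.F ω, T (fun j => s.W j ω)))
      = condEnt s.p (fun ω => (s.A k' n0 ω, s.jointS (finGe N 1) ω))
        (fun ω => (s.F ω, T (fun j => s.W j ω))) := by
  classical
  choose φ hφ using s.A_det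
  choose qf hqf using s.Q_det
  choose sg hsg using s.S_det
  set G : s.Qry → (Fin K → s.Msg) → s.Ans × ((finGe N 1 : Finset (Fin N)) → s.Sto) :=
    fun qq w => (φ n0 qq (sg n0 w), fun i => sg i.1 w) with hG
  have hX : ∀ (kk : Fin K),
      (fun ω => (s.A kk n0 ω, s.jointS (finGe N 1) ω))
        = fun ω => G (qf kk n0 (s.F ω)) (fun j => s.W j ω) := by
    intro kk
    funext ω
    rw [hG]
    refine Prod.ext ?_ ?_
    · show s.A kk n0 ω = φ n0 (qf kk n0 (s.F ω)) (sg n0 (fun j => s.W j ω))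
      rw [← hqf kk n0 ω, ← hsg n0 ω, ← hφ n0 kk ω]
    · funext i
      show s.S i.1 ω = sg i.1 (fun j => s.W j ω)
      rw [← hsg i.1 ω]
  have hqpriv : ∀ x, prob s.p (fun ω => qf k n0 (s.F ω)) x
      = prob s.p (fun ω => qf k' n0 (s.F ω)) x := by
    intro x
    calc prob s.p (fun ω => qf k n0 (s.F ω)) x = prob s.p (s.Q k n0) x :=
          prob_congr (fun ω => by rw [hqf k n0 ω])
      _ = prob s.p (s.Q k' n0) x := s.privacy n0 k k' x
      _ = prob s.p (fun ω => qf k' n0 (s.F ω)) x :=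
          prob_congr (fun ω => by rw [hqf k' n0 ω])
  rw [hX k, hX k']
  exact swap_general s.p_sum s.F (fun ω => (fun j => s.W j ω))
    (fun f w => s.F_indep f w) (qf k n0) (qf k' n0) hqpriv G T

end PIRScheme

namespace PIRScheme

variable {N K : ℕ}

lemma step (s : PIRScheme N K) (hN : 2 ≤ N) (hK : 2 ≤ K) (n0 : Fin N) (hn0 : (n0 : ℕ) = 0)
    (k1 : Fin K) (m : ℕ) (h1 : 1 ≤ m) (h2 : m < K) :
    condEnt s.p (fun ω => (s.A k1 n0 ω, s.jointS (finGe N 1) ω))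
        (fun ω => (s.F ω, s.jointW (finLt K m) ω))
      = s.L + condEnt s.p (fun ω => (s.A k1 n0 ω, s.jointS (finGe N 1) ω))
        (fun ω => (s.F ω, s.jointW (finLt K (m+1)) ω)) := by
  classical
  have hΩ : Nonempty s.Ω := s.nonempty_omega
  set km : Fin K := ⟨m, h2⟩ with hkm
  have hMsg : Nonempty s.Msg := ⟨s.W km (Classical.arbitrary s.Ω)⟩
  have hmemkm : km ∈ finLt K (m+1) := by
    simp only [finLt, Finset.mem_filter, Finset.mem_univ, true_and]
    show m < m + 1
    omega
  have hkm_not : km ∉ finLt K m := by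
    simp only [finLt, Finset.mem_filter, Finset.mem_univ, true_and]
    show ¬ m < m
    omega
  have hup : ∀ j : Fin K, j ∈ finLt K m → j ∈ finLt K (m+1) := by
    intro j hj
    simp only [finLt, Finset.mem_filter, Finset.mem_univ, true_and] at hj ⊢
    omega
  -- swap 1: use privacy to replace k1 by km
  have swap1 : condEnt s.p (fun ω => (s.A k1 n0 ω, s.jointS (finGe N 1) ω))
      (fun ω => (s.F ω, s.jointW (finLt K m) ω))
    = condEnt s.p (fun ω => (s.A km n0 ω, s.jointS (finGe N 1) ω))
      (fun ω => (s.F ω, s.jointW (finLt K m) ω)) :=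
    s.swap_pir hN n0 k1 km (fun w => (fun i : (finLt K m : Finset (Fin K)) => w i.1))
  -- decoding: W km is a function of the pair
  obtain ⟨g, hg⟩ := s.decode hN n0 hn0 km (fun ω => s.jointW (finLt K m) ω)
  have hzero : condEnt s.p (s.W km)
      (fun ω => ((s.A km n0 ω, s.jointS (finGe N 1) ω),
        (s.F ω, s.jointW (finLt K m) ω))) = 0 :=
    condEnt_comp_eq_zero g (fun ω => hg ω)
  -- chain rules
  have c1 := condEnt_chain s.p (s.W km)
    (fun ω => (s.A km n0 ω, s.jointS (finGe N 1) ω))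
    (fun ω => (s.F ω, s.jointW (finLt K m) ω))
  have c3 := condEnt_chain s.p
    (fun ω => (s.A km n0 ω, s.jointS (finGe N 1) ω)) (s.W km)
    (fun ω => (s.F ω, s.jointW (finLt K m) ω))
  have cswap : condEnt s.p
      (fun ω => (s.W km ω, (s.A km n0 ω, s.jointS (finGe N 1) ω)))
      (fun ω => (s.F ω, s.jointW (finLt K m) ω))
    = condEnt s.p
      (fun ω => ((s.A km n0 ω, s.jointS (finGe N 1) ω), s.W km ω))
      (fun ω => (s.F ω, s.jointW (finLt K m) ω)) :=
    condEnt_congr_left Prod.swap Prod.swap (fun ω => rfl) (fun ω => rfl)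
  -- H(W_km | F, W_{<m}) = L
  have c4 : condEnt s.p (s.W km)
      (fun ω => (s.F ω, s.jointW (finLt K m) ω)) = s.L := by
    rw [condEnt_of_indep s.p_sum
      (fun a z => s.indep_W_F_jointW hkm_not hMsg a z), s.W_ent km]
  -- relabel the conditioning (W_km, F, W_{<m}) as (F, W_{<m+1})
  have c5 : condEnt s.p (fun ω => (s.A km n0 ω, s.jointS (finGe N 1) ω))
      (fun ω => (s.W km ω, (s.F ω, s.jointW (finLt K m) ω)))
    = condEnt s.p (fun ω => (s.A km n0 ω, s.jointS (finGe N 1) ω))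
      (fun ω => (s.F ω, s.jointW (finLt K (m+1)) ω)) := by
    refine condEnt_congr_right
      (fun z => (z.2.1, fun i => if h : i.1 ∈ finLt K m then z.2.2 ⟨i.1, h⟩ else z.1))
      (fun z => (z.2 ⟨km, hmemkm⟩, (z.1, fun i => z.2 ⟨i.1, hup i.1 i.2⟩)))
      (fun ω => ?_) (fun ω => rfl)
    refine Prod.ext rfl ?_
    funext i
    show s.W i.1 ω
      = if h : i.1 ∈ finLt K m then s.jointW (finLt K m) ω ⟨i.1, h⟩ else s.W km ω
    by_cases h : i.1 ∈ finLt K m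
    · rw [dif_pos h]; rfl
    · rw [dif_neg h]
      have hival : (i.1 : ℕ) = m := by
        have hlt := i.2
        simp only [finLt, Finset.mem_filter, Finset.mem_univ, true_and] at hlt h
        omega
      have heq : i.1 = km := Fin.ext hival
      rw [heq]
  -- swap 2: use privacy to go back from km to k1
  have swap2 : condEnt s.p (fun ω => (s.A km n0 ω, s.jointS (finGe N 1) ω))
      (fun ω => (s.F ω, s.jointW (finLt K (m+1)) ω))
    = condEnt s.p (fun ω => (s.A k1 n0 ω, s.jointS (finGe N 1) ω))
      (fun ω => (s.F ω, s.jointW (finLt K (m+1)) ω)) :=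
    s.swap_pir hN n0 km k1 (fun w => (fun i : (finLt K (m+1) : Finset (Fin K)) => w i.1))
  rw [swap1, ← swap2]
  rw [c5] at c3
  linarith [c1, c3, cswap, hzero, c4]

lemma ind (s : PIRScheme N K) (hN : 2 ≤ N) (hK : 2 ≤ K) (n0 : Fin N) (hn0 : (n0 : ℕ) = 0)
    (k1 : Fin K) : ∀ j : ℕ, j ≤ K - 1 →
    (j : ℝ) * s.L ≤ condEnt s.p (fun ω => (s.A k1 n0 ω, s.jointS (finGe N 1) ω))
      (fun ω => (s.F ω, s.jointW (finLt K (K - j)) ω)) := by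
  intro j
  induction j with
  | zero =>
    intro _
    simpa using condEnt_nonneg s.p_nonneg _ _
  | succ j ih =>
    intro hj
    have hj' : j ≤ K - 1 := by omega
    have h1 : 1 ≤ K - (j+1) := by omega
    have h2 : K - (j+1) < K := by omega
    have hstep := s.step hN hK n0 hn0 k1 (K - (j+1)) h1 h2
    have harith : K - (j+1) + 1 = K - j := by omega
    rw [harith] at hstep
    rw [hstep]
    have hih := ih hj'
    push_cast
    linarith

end PIRScheme

theorem aux_stmt6 (N K : ℕ) (hN : 2 ≤ N) (hK : 2 ≤ K) (s : PIRScheme N K) :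
    condEnt s.p
        (fun ω => (s.A ⟨1, by linarith⟩ ⟨0, by linarith⟩ ω, s.jointS (finGe N 1) ω))
        (fun ω => (s.F ω, s.W ⟨0, by linarith⟩ ω))
      ≥ ((K : ℝ) - 1) * s.L := by
  classical
  have hmain := s.ind hN hK ⟨0, by linarith⟩ rfl ⟨1, by linarith⟩ (K - 1) (le_refl _)
  have hKK : K - (K - 1) = 1 := by omega
  rw [hKK] at hmain
  have hmem0 : (⟨0, by linarith⟩ : Fin K) ∈ finLt K 1 := by
    simp only [finLt, Finset.mem_filter, Finset.mem_univ, true_and]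
    omega
  have hrel : condEnt s.p
      (fun ω => (s.A ⟨1, by linarith⟩ ⟨0, by linarith⟩ ω, s.jointS (finGe N 1) ω))
      (fun ω => (s.F ω, s.jointW (finLt K 1) ω))
    = condEnt s.p
      (fun ω => (s.A ⟨1, by linarith⟩ ⟨0, by linarith⟩ ω, s.jointS (finGe N 1) ω))
      (fun ω => (s.F ω, s.W ⟨0, by linarith⟩ ω)) := by
    refine condEnt_congr_right
      (fun z => (z.1, z.2 ⟨⟨0, by linarith⟩, hmem0⟩))
      (fun z => (z.1, fun _ => z.2))
      (fun ω => rfl) (fun ω => ?_)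
    refine Prod.ext rfl ?_
    funext i
    show s.W i.1 ω = s.W ⟨0, by linarith⟩ ω
    have hival : (i.1 : ℕ) = 0 := by
      have hlt := i.2
      simp only [finLt, Finset.mem_filter, Finset.mem_univ, true_and] at hlt
      omega
    have heq : i.1 = (⟨0, by linarith⟩ : Fin K) := Fin.ext hival
    rw [heq]
  rw [hrel] at hmain
  have hcast : ((K - 1 : ℕ) : ℝ) = (K : ℝ) - 1 := by
    rw [Nat.cast_sub (by omega), Nat.cast_one]
  rw [hcast] at hmain
  exact hmain

/-- Lemma 3, inequality (51): `H(A₁^[2], S_{2:N} | F, W₁) ≥ (K-1)·L`. -/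
theorem stmt6 (N K : ℕ) (hN : 2 ≤ N) (hK : 2 ≤ K) (s : PIRScheme N K) :
    condEnt s.p
        (fun ω => (s.A ⟨1, by omega⟩ ⟨0, by omega⟩ ω, s.jointS (finGe N 1) ω))
        (fun ω => (s.F ω, s.W ⟨0, by omega⟩ ω))
      ≥ ((K : ℝ) - 1) * s.L := by
  exact aux_stmt6 N K hN hK s
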